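/- arXiv:1405.5900 — 3 statements merged into one kernel-verified Lean document; each statement's English description precedes it below -/
import Mathlib

section
/- For every 1 ≤ k < n, the PLS filter factor in the direction of the largest eigenvalue satisfies f_1^k > 1 if k is odd and f_1^k < 1 if k is even, where f_1^k = 1 − Q̂_k(λ_1); equivalently Q̂_k(λ_1) < 0 when k is odd and Q̂_k(λ_1) > 0 when k is even. -/
open Polynomial
open Matrix Polynomial

private lemma no_sign_change (a b : ℝ) :
    ∀ (N : ℕ) (f : ℝ[X]), f.natDegree ≤ N →
    (∀ x, x ∈ Set.Icc a b → f.IsRoot x → Even (f.rootMultiplicity x)) →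
    ∀ x ∈ Set.Icc a b, ∀ y ∈ Set.Icc a b, 0 ≤ f.eval x * f.eval y := by
  intro N
  induction N using Nat.strong_induction_on with
  | _ N ih =>
    intro f hdeg heven x hx y hy
    by_contra hneg
    push_neg at hneg
    have hfx : f.eval x ≠ 0 := fun h => by simp [h] at hneg
    have hfy : f.eval y ≠ 0 := fun h => by simp [h] at hneg
    have hf0 : f ≠ 0 := fun h => by simp [h] at hneg
    -- get a root between x and y
    have hcont : ∀ s t : ℝ, ContinuousOn (fun z => f.eval z) (Set.Icc s t) :=
      fun s t => (f.continuous_aeval).continuousOn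
    have hroot : ∃ c, c ∈ Set.Icc a b ∧ f.IsRoot c := by
      rcases le_total x y with hxy | hxy
      · rcases le_total (f.eval x) (f.eval y) with ho | ho
        · have : (0:ℝ) ∈ Set.Icc (f.eval x) (f.eval y) := by
            constructor <;> nlinarith
          obtain ⟨c, hc, hc0⟩ := intermediate_value_Icc hxy (hcont x y) this
          exact ⟨c, ⟨le_trans hx.1 hc.1, le_trans hc.2 hy.2⟩, hc0⟩
        · have : (0:ℝ) ∈ Set.Icc (f.eval y) (f.eval x) := by
            constructor <;> nlinarith
          obtain ⟨c, hc, hc0⟩ := intermediate_value_Icc' hxy (hcont x y) this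
          exact ⟨c, ⟨le_trans hx.1 hc.1, le_trans hc.2 hy.2⟩, hc0⟩
      · rcases le_total (f.eval y) (f.eval x) with ho | ho
        · have : (0:ℝ) ∈ Set.Icc (f.eval y) (f.eval x) := by
            constructor <;> nlinarith
          obtain ⟨c, hc, hc0⟩ := intermediate_value_Icc hxy (hcont y x) this
          exact ⟨c, ⟨le_trans hy.1 hc.1, le_trans hc.2 hx.2⟩, hc0⟩
        · have : (0:ℝ) ∈ Set.Icc (f.eval x) (f.eval y) := by
            constructor <;> nlinarith
          obtain ⟨c, hc, hc0⟩ := intermediate_value_Icc' hxy (hcont y x) this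
          exact ⟨c, ⟨le_trans hy.1 hc.1, le_trans hc.2 hx.2⟩, hc0⟩
    obtain ⟨c, hcI, hcr⟩ := hroot
    set m := f.rootMultiplicity c with hm
    have hmeven : Even m := heven c hcI hcr
    have hmpos : 0 < m := (rootMultiplicity_pos hf0).mpr hcr
    have hm2 : 2 ≤ m := by obtain ⟨t, ht⟩ := hmeven; omega
    obtain ⟨g, hfg, hnd⟩ := f.exists_eq_pow_rootMultiplicity_mul_and_not_dvd hf0 c
    have hg0 : g ≠ 0 := by rintro rfl; simp at hfg; exact hf0 hfg
    have hgc : g.eval c ≠ 0 := fun h => hnd (dvd_iff_isRoot.mpr h)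
    have hdegf : f.natDegree = m + g.natDegree := by
      rw [hfg, natDegree_mul (pow_ne_zero _ (X_sub_C_ne_zero c)) hg0, natDegree_pow, natDegree_X_sub_C, mul_one]
    have hglt : g.natDegree < N := by omega
    have hgeven : ∀ x, x ∈ Set.Icc a b → g.IsRoot x → Even (g.rootMultiplicity x) := by
      intro z hz hzr
      by_cases hzc : z = c
      · exact absurd (hzc ▸ hzr) hgc
      · have := heven z hz (by rw [hfg]; simp [IsRoot, hzr.eq_zero])
        rw [hfg, rootMultiplicity_mul (by rw [← hfg]; exact hf0)] at this
        have hpow : ((X - C c) ^ m : ℝ[X]).rootMultiplicity z = 0 := by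
          refine rootMultiplicity_eq_zero ?_
          intro hr
          exact absurd (by simpa using hr.eq_zero) (pow_ne_zero m (sub_ne_zero_of_ne hzc))
        rwa [hpow, zero_add] at this
    have := ih g.natDegree hglt g le_rfl hgeven x hx y hy
    have hex : f.eval x = (x - c) ^ m * g.eval x := by rw [hfg]; simp; exact Or.inl rfl
    have hey : f.eval y = (y - c) ^ m * g.eval y := by rw [hfg]; simp; exact Or.inl rfl
    have h1 : 0 ≤ (x - c) ^ m := hmeven.pow_nonneg _
    have h2 : 0 ≤ (y - c) ^ m := hmeven.pow_nonneg _
    have hprod : eval x f * eval y f = ((x - c) ^ m * (y - c) ^ m) * (eval x g * eval y g) := by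
      rw [hex, hey]; ring
    nlinarith [mul_nonneg (mul_nonneg h1 h2) this]

lemma key_sign {n k : ℕ} (hk1 : 1 ≤ k) (hkn : k < n)
    (lam : Fin n → ℝ) (hanti : StrictAnti lam) (hpos : ∀ i, 0 < lam i)
    (w : Fin n → ℝ) (hw : ∀ i, 0 < w i)
    (Q : ℝ[X]) (hdeg : Q.natDegree ≤ k) (h0 : Q.eval 0 = 1)
    (horth : ∀ R : ℝ[X], R.natDegree ≤ k → R.eval 0 = 0 →
      ∑ i, w i * Q.eval (lam i) * R.eval (lam i) = 0)
    (i0 : Fin n) (hi0 : (i0 : ℕ) = 0) :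
    (Odd k → Q.eval (lam i0) < 0) ∧ (Even k → 0 < Q.eval (lam i0)) := by
  classical
  have hn : 2 ≤ n := by omega
  set in1 : Fin n := ⟨n - 1, by omega⟩ with hin1
  set a := lam in1 with ha
  set b := lam i0 with hb
  have hapos : 0 < a := hpos in1
  have hIcc : ∀ i, lam i ∈ Set.Icc a b := by
    intro i
    constructor
    · exact hanti.antitone (by simp [hin1, Fin.le_def]; omega)
    · exact hanti.antitone (by simp [Fin.le_def, hi0])
  have hQ0 : Q ≠ 0 := fun h => by simp [h] at h0
  have hlt : ∀ i, i ≠ i0 → lam i < b := by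
    intro i hi
    exact hanti (by rw [Fin.lt_def, hi0]; omega)
  -- Step 1: b = lam i0 is not a root of Q
  have hbroot : ¬ Q.IsRoot b := by
    intro hroot
    obtain ⟨G, hG⟩ := dvd_iff_isRoot.mpr hroot
    have hG0 : G ≠ 0 := by rintro rfl; rw [mul_zero] at hG; exact hQ0 hG
    have hdq : Q.natDegree = 1 + G.natDegree := by
      rw [hG, natDegree_mul (X_sub_C_ne_zero b) hG0, natDegree_X_sub_C]
    have hGdeg : G.natDegree ≤ k - 1 := by omega
    have hRdeg : (X * G).natDegree ≤ k := by
      rw [natDegree_mul X_ne_zero hG0, natDegree_X]; omega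
    have hsum := horth (X * G) hRdeg (by simp)
    have hterm : ∀ i, w i * Q.eval (lam i) * ((X * G).eval (lam i)) =
        (w i * lam i * (lam i - b)) * (G.eval (lam i))^2 := by
      intro i; rw [hG]; simp; ring
    rw [Finset.sum_congr rfl (fun i _ => hterm i)] at hsum
    have hnonpos : ∀ i ∈ Finset.univ, (w i * lam i * (lam i - b)) * (G.eval (lam i))^2 ≤ 0 := by
      intro i _
      rcases eq_or_ne i i0 with rfl | hi
      · simp [hb]
      · have h1 := hlt i hi
        have h2 := hpos i
        have h3 := hw i
        have h4 : w i * lam i * (lam i - b) < 0 := by nlinarith [mul_pos h3 h2]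
        exact mul_nonpos_of_nonpos_of_nonneg h4.le (sq_nonneg _)
    have hzero := (Finset.sum_eq_zero_iff_of_nonpos hnonpos).mp hsum
    have hGroot : ∀ i, i ≠ i0 → G.eval (lam i) = 0 := by
      intro i hi
      have h5 := hzero i (Finset.mem_univ i)
      have h1 := hlt i hi
      have h2 := hpos i
      have h3 := hw i
      have h4 : w i * lam i * (lam i - b) < 0 := by nlinarith [mul_pos h3 h2]
      have := (mul_eq_zero.mp h5).resolve_left h4.ne
      exact pow_eq_zero_iff (two_ne_zero) |>.mp this
    -- G has n-1 distinct roots but degree ≤ k-1 < n-1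
    have hsub : (Finset.univ.erase i0).image lam ⊆ G.roots.toFinset := by
      intro x hx
      obtain ⟨i, hi, rfl⟩ := Finset.mem_image.mp hx
      rw [Multiset.mem_toFinset, mem_roots hG0]
      exact hGroot i (Finset.ne_of_mem_erase hi)
    have hcard : ((Finset.univ.erase i0).image lam).card = n - 1 := by
      rw [Finset.card_image_of_injective _ hanti.injective, Finset.card_erase_of_mem (Finset.mem_univ i0), Finset.card_univ, Fintype.card_fin]
    have hle := Finset.card_le_card hsub
    have hle2 : G.roots.toFinset.card ≤ G.natDegree :=
      le_trans (Multiset.toFinset_card_le _) (Polynomial.card_roots' G)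
    omega
  -- Step 2: the set of odd-multiplicity roots of Q in [a,b] has at least k elements
  set T : Finset ℝ := Q.roots.toFinset.filter
    (fun x => Odd (Q.rootMultiplicity x) ∧ x ∈ Set.Icc a b) with hT
  have hTk : k ≤ T.card := by
    by_contra hcon
    push_neg at hcon
    set P : ℝ[X] := ∏ θ ∈ T, (X - C θ) with hP
    have hPmonic : P.Monic := monic_prod_of_monic _ _ (fun θ _ => monic_X_sub_C θ)
    have hP0 : P ≠ 0 := hPmonic.ne_zero
    have hProots : P.roots = T.val := by
      rw [hP, Finset.prod_eq_multiset_prod, roots_multiset_prod_X_sub_C]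
    have hPdeg : P.natDegree = T.card := by
      rw [hP, natDegree_prod _ _ (fun θ _ => X_sub_C_ne_zero θ)]
      simp [natDegree_X_sub_C]
    have hPmul : ∀ x, P.rootMultiplicity x = if x ∈ T then 1 else 0 := by
      intro x
      rw [← count_roots, hProots]
      split_ifs with h
      · exact Multiset.count_eq_one_of_mem T.nodup h
      · exact Multiset.count_eq_zero_of_notMem h
    set f := Q * P with hf
    have hf0 : f ≠ 0 := mul_ne_zero hQ0 hP0
    have heven : ∀ x, x ∈ Set.Icc a b → f.IsRoot x → Even (f.rootMultiplicity x) := by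
      intro x hx _
      rw [hf, rootMultiplicity_mul hf0, hPmul]
      by_cases hodd : Odd (Q.rootMultiplicity x)
      · have hxr : x ∈ Q.roots.toFinset := by
          rw [Multiset.mem_toFinset, mem_roots hQ0]
          rw [← rootMultiplicity_pos hQ0]
          exact hodd.pos
        have hxT : x ∈ T := by
          rw [hT, Finset.mem_filter]
          exact ⟨hxr, hodd, hx⟩
        rw [if_pos hxT]
        exact hodd.add_one
      · have hxT : x ∉ T := by
          rw [hT, Finset.mem_filter]
          tauto
        rw [if_neg hxT, add_zero]
        exact Nat.not_odd_iff_even.mp hodd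
    have hsign := no_sign_change a b f.natDegree f le_rfl heven
    have hRdeg : (X * P).natDegree ≤ k := by
      rw [natDegree_mul X_ne_zero hP0, natDegree_X, hPdeg]; omega
    have hsum := horth (X * P) hRdeg (by simp)
    have hterm : ∀ i, w i * Q.eval (lam i) * ((X * P).eval (lam i)) =
        (w i * lam i) * (f.eval (lam i)) := by
      intro i; rw [hf]; simp; ring
    rw [Finset.sum_congr rfl (fun i _ => hterm i)] at hsum
    have hall0 : ∀ i, f.eval (lam i) = 0 := by
      by_contra hcon2
      push_neg at hcon2
      obtain ⟨j, hj⟩ := hcon2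
      rcases Ne.lt_or_gt hj with hneg | hposj
      · have hallnp : ∀ i ∈ Finset.univ, (w i * lam i) * (f.eval (lam i)) ≤ 0 := by
          intro i _
          have hs := hsign (lam i) (hIcc i) (lam j) (hIcc j)
          have hfile : f.eval (lam i) ≤ 0 := by nlinarith
          exact mul_nonpos_of_nonneg_of_nonpos (mul_pos (hw i) (hpos i)).le hfile
        have hzero := (Finset.sum_eq_zero_iff_of_nonpos hallnp).mp hsum j (Finset.mem_univ j)
        nlinarith [mul_pos (hw j) (hpos j)]
      · have hallnn : ∀ i ∈ Finset.univ, 0 ≤ (w i * lam i) * (f.eval (lam i)) := by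
          intro i _
          have hs := hsign (lam i) (hIcc i) (lam j) (hIcc j)
          have hfile : 0 ≤ f.eval (lam i) := by nlinarith
          exact mul_nonneg (mul_pos (hw i) (hpos i)).le hfile
        have hzero := (Finset.sum_eq_zero_iff_of_nonneg hallnn).mp hsum j (Finset.mem_univ j)
        nlinarith [mul_pos (hw j) (hpos j)]
    -- hence Q vanishes at all n nodes: contradiction
    have hQroot : ∀ i, Q.eval (lam i) = 0 := by
      intro i
      have hfe := hall0 i
      rw [hf, eval_mul] at hfe
      rcases mul_eq_zero.mp hfe with h | h
      · exact h
      · have hmem : lam i ∈ T := by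
          have hm2 : lam i ∈ P.roots := (mem_roots hP0).mpr h
          rw [hProots] at hm2
          exact hm2
        rw [hT, Finset.mem_filter, Multiset.mem_toFinset, mem_roots hQ0] at hmem
        exact hmem.1
    have hsub : Finset.univ.image lam ⊆ Q.roots.toFinset := by
      intro x hx
      obtain ⟨i, _, rfl⟩ := Finset.mem_image.mp hx
      rw [Multiset.mem_toFinset, mem_roots hQ0]
      exact hQroot i
    have hcard : (Finset.univ.image lam).card = n := by
      rw [Finset.card_image_of_injective _ hanti.injective, Finset.card_univ, Fintype.card_fin]
    have hle := Finset.card_le_card hsub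
    have hle2 : Q.roots.toFinset.card ≤ Q.natDegree :=
      le_trans (Multiset.toFinset_card_le _) (Polynomial.card_roots' Q)
    omega
  -- Step 3: conclude
  have hTle : T.val ≤ Q.roots := by
    refine Multiset.le_iff_count.mpr (fun x => ?_)
    by_cases hx : x ∈ T
    · rw [Multiset.count_eq_one_of_mem T.nodup hx]
      rw [hT, Finset.mem_filter, Multiset.mem_toFinset] at hx
      exact Multiset.one_le_count_iff_mem.mpr hx.1
    · rw [Multiset.count_eq_zero_of_notMem hx]
      exact Nat.zero_le _
  have hcards : Multiset.card Q.roots ≤ k := le_trans (Polynomial.card_roots' Q) hdeg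
  have heqroots : Q.roots = T.val := by
    refine (Multiset.eq_of_le_of_card_le hTle ?_).symm
    simpa using le_trans hcards hTk
  have hcardeq : Multiset.card Q.roots = Q.natDegree := by
    have h1 : T.card ≤ Multiset.card Q.roots := by
      rw [heqroots]; exact le_rfl
    have h2 := Polynomial.card_roots' Q
    omega
  have hfact := C_leadingCoeff_mul_prod_multiset_X_sub_C hcardeq
  have hrange : ∀ r ∈ Q.roots, 0 < r ∧ r < b := by
    intro r hr
    have hrT : r ∈ T := by rw [heqroots] at hr; exact hr
    rw [hT, Finset.mem_filter] at hrT
    obtain ⟨hr1, _, hr3⟩ := hrT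
    have hroot : Q.IsRoot r := (mem_roots hQ0).mp (Multiset.mem_toFinset.mp hr1)
    refine ⟨lt_of_lt_of_le hapos hr3.1, lt_of_le_of_ne hr3.2 ?_⟩
    intro h
    exact hbroot (h ▸ hroot)
  have hkcard : Multiset.card Q.roots = k := by
    have h1 : T.card ≤ Multiset.card Q.roots := by rw [heqroots]; exact le_rfl
    omega
  -- evaluate the factorization at 0 and at b
  have heval : ∀ z : ℝ, Q.eval z = Q.leadingCoeff * (Q.roots.map (fun r => z - r)).prod := by
    intro z
    conv_lhs => rw [← hfact]
    rw [eval_mul, eval_C, eval_multiset_prod, Multiset.map_map]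
    simp
  have hprodpos : ∀ z : ℝ, (∀ r ∈ Q.roots, r < z) → 0 < (Q.roots.map (fun r => z - r)).prod := by
    intro z hz
    refine Multiset.prod_pos (fun x hx => ?_)
    obtain ⟨r, hr, rfl⟩ := Multiset.mem_map.mp hx
    exact sub_pos.mpr (hz r hr)
  have hp2 : 0 < (Q.roots.map (fun r => b - r)).prod :=
    hprodpos b (fun r hr => (hrange r hr).2)
  have h0eval : (1:ℝ) = Q.leadingCoeff * ((-1)^k * Q.roots.prod) := by
    have h0e : Q.eval 0 = Q.leadingCoeff * ((-1)^k * Q.roots.prod) := by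
      rw [heval 0]
      congr 1
      have hmc : (Q.roots.map (fun r => (0:ℝ) - r)) = Q.roots.map Neg.neg := by
        refine Multiset.map_congr rfl (fun x _ => by ring)
      rw [hmc, Multiset.prod_map_neg, hkcard]
    rw [← h0e, h0]
  have hp1 : 0 < Q.roots.prod := Multiset.prod_pos (fun r hr => (hrange r hr).1)
  have hevalb : Q.eval b = Q.leadingCoeff * (Q.roots.map (fun r => b - r)).prod := heval b
  constructor
  · intro hodd
    rw [hodd.neg_one_pow] at h0eval
    nlinarith
  · intro heven2
    rw [heven2.neg_one_pow] at h0eval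
    nlinarith

/-- the PLS filter factor in the direction of the largest eigenvalue
λ_1 (index 0 here) satisfies f_1^k > 1 if k is odd and f_1^k < 1 if k is even,
where f_1^k = 1 − Q̂_k(λ_1). -/
theorem stmt13 {n p : ℕ} (X : Matrix (Fin n) (Fin p) ℝ) (Y : Fin n → ℝ)
    (lam : Fin n → ℝ) (u : Fin n → Fin n → ℝ)
    (hortho : ∀ i j, u i ⬝ᵥ u j = if i = j then (1 : ℝ) else 0)
    (hspec : X * Xᵀ = ∑ i, lam i • vecMulVec (u i) (u i))
    (hanti : StrictAnti lam) (hpos : ∀ i, 0 < lam i)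
    (hphat : ∀ i, u i ⬝ᵥ Y ≠ 0)
    (Qhat : ℕ → Polynomial ℝ)
    (hQmem : ∀ k, 1 ≤ k → k < n → (Qhat k).natDegree ≤ k ∧ (Qhat k).eval 0 = 1)
    (hQmin : ∀ k, 1 ≤ k → k < n → ∀ Q : Polynomial ℝ, Q.natDegree ≤ k → Q.eval 0 = 1 →
      ∑ i, (((Polynomial.aeval (X * Xᵀ)) (Qhat k) *ᵥ Y) i) ^ 2 ≤
        ∑ i, (((Polynomial.aeval (X * Xᵀ)) Q *ᵥ Y) i) ^ 2)
    (k : ℕ) (hk1 : 1 ≤ k) (hkn : k < n) :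
    (Odd k → 1 < 1 - (Qhat k).eval (lam ⟨0, by omega⟩)) ∧
      (Even k → 1 - (Qhat k).eval (lam ⟨0, by omega⟩) < 1) := by
  classical
  set U : Matrix (Fin n) (Fin n) ℝ := Matrix.of u with hU
  have hUU : U * Uᵀ = 1 := by
    ext i j
    have := hortho i j
    simp only [Matrix.mul_apply, Matrix.one_apply, Matrix.transpose_apply, hU, Matrix.of_apply]
    simpa [dotProduct] using this
  have hUtU : Uᵀ * U = 1 := mul_eq_one_comm.mp hUU
  have hXX : X * Xᵀ = Uᵀ * Matrix.diagonal lam * U := by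
    rw [hspec]
    ext i j
    rw [Matrix.mul_apply]
    simp only [Matrix.sum_apply, Matrix.smul_apply, vecMulVec_apply, smul_eq_mul,
      Matrix.mul_diagonal, Matrix.transpose_apply, hU, Matrix.of_apply]
    exact Finset.sum_congr rfl (fun b _ => by ring)
  have hpow : ∀ m : ℕ, (X * Xᵀ)^m = Uᵀ * (Matrix.diagonal (fun i => lam i ^ m)) * U := by
    intro m
    induction m with
    | zero =>
      simp only [pow_zero]
      have hd1 : (Matrix.diagonal fun _ : Fin n => (1:ℝ)) = 1 := Matrix.diagonal_one
      rw [hd1, Matrix.mul_one, hUtU]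
    | succ m ih =>
      rw [pow_succ, ih, hXX]
      calc Uᵀ * Matrix.diagonal (fun i => lam i ^ m) * U * (Uᵀ * Matrix.diagonal lam * U)
          = Uᵀ * Matrix.diagonal (fun i => lam i ^ m) * (U * Uᵀ) * Matrix.diagonal lam * U := by
            simp only [Matrix.mul_assoc]
        _ = Uᵀ * (Matrix.diagonal (fun i => lam i ^ m) * Matrix.diagonal lam) * U := by
            rw [hUU, Matrix.mul_one]
            simp only [Matrix.mul_assoc]
        _ = Uᵀ * Matrix.diagonal (fun i => lam i ^ (m+1)) * U := by
            have hdd : Matrix.diagonal (fun i => lam i ^ m) * Matrix.diagonal lam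
                = Matrix.diagonal (fun i => lam i ^ (m+1)) := by
              ext i j
              rcases eq_or_ne i j with rfl | hij
              · simp [Matrix.diagonal_apply_eq, pow_succ, Matrix.mul_diagonal]
              · simp [Matrix.diagonal_apply_ne _ hij, Matrix.mul_diagonal]
            rw [hdd]
  have haev : ∀ Qp : ℝ[X], Polynomial.aeval (X * Xᵀ) Qp
      = Uᵀ * Matrix.diagonal (fun i => Qp.eval (lam i)) * U := by
    intro Qp
    induction Qp using Polynomial.induction_on' with
    | add p q hp hq =>
      rw [map_add, hp, hq]
      have hda : (Matrix.diagonal fun i => (p + q).eval (lam i))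
          = Matrix.diagonal (fun i => p.eval (lam i)) + Matrix.diagonal (fun i => q.eval (lam i)) := by
        ext i j
        rcases eq_or_ne i j with rfl | hij
        · simp [Matrix.diagonal_apply_eq]
        · simp [Matrix.diagonal_apply_ne _ hij]
      rw [hda, Matrix.mul_add, Matrix.add_mul]
    | monomial m c =>
      rw [aeval_monomial, ← Algebra.smul_def, hpow m]
      have hds : (Matrix.diagonal fun i => (monomial m c).eval (lam i))
          = c • Matrix.diagonal (fun i => lam i ^ m) := by
        ext i j
        rcases eq_or_ne i j with rfl | hij
        · simp [Matrix.diagonal_apply_eq, eval_monomial]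
        · simp [Matrix.diagonal_apply_ne _ hij]
      rw [hds, Matrix.mul_smul, Matrix.smul_mul]
  set w : Fin n → ℝ := fun i => (u i ⬝ᵥ Y)^2 with hwdef
  have hw : ∀ i, 0 < w i := fun i => by
    have := hphat i
    positivity
  have hdotsq : ∀ v : Fin n → ℝ, ∑ i, (v i)^2 = v ⬝ᵥ v := fun v => by
    simp [dotProduct, sq]
  have hobj : ∀ Qp : ℝ[X], ∑ i, (((Polynomial.aeval (X * Xᵀ)) Qp *ᵥ Y) i)^2
      = ∑ i, w i * (Qp.eval (lam i))^2 := by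
    intro Qp
    rw [haev Qp]
    set D := Matrix.diagonal (fun i => Qp.eval (lam i)) with hD
    have h1 : (Uᵀ * D * U) *ᵥ Y = Uᵀ *ᵥ (D *ᵥ (U *ᵥ Y)) := by
      rw [← Matrix.mulVec_mulVec, ← Matrix.mulVec_mulVec]
    rw [h1, hdotsq]
    have h2 : ∀ v : Fin n → ℝ, (Uᵀ *ᵥ v) ⬝ᵥ (Uᵀ *ᵥ v) = v ⬝ᵥ v := by
      intro v
      have e1 : v ⬝ᵥ v = v ⬝ᵥ ((U * Uᵀ) *ᵥ v) := by rw [hUU, Matrix.one_mulVec]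
      rw [e1, ← Matrix.mulVec_mulVec, Matrix.dotProduct_mulVec v U, ← Matrix.mulVec_transpose]
    rw [h2, ← hdotsq]
    refine Finset.sum_congr rfl (fun i _ => ?_)
    have h3 : (D *ᵥ (U *ᵥ Y)) i = Qp.eval (lam i) * ((U *ᵥ Y) i) := by
      rw [hD, Matrix.mulVec_diagonal]
    have h4 : (U *ᵥ Y) i = u i ⬝ᵥ Y := by
      simp [Matrix.mulVec, hU, dotProduct]
    rw [h3, h4, hwdef]
    ring
  obtain ⟨hQd, hQ0e⟩ := hQmem k hk1 hkn
  have horth : ∀ R : ℝ[X], R.natDegree ≤ k → R.eval 0 = 0 →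
      ∑ i, w i * (Qhat k).eval (lam i) * R.eval (lam i) = 0 := by
    intro R hRd hR0
    set S := ∑ i, w i * (Qhat k).eval (lam i) * R.eval (lam i) with hS
    set Tv := ∑ i, w i * (R.eval (lam i))^2 with hTv
    have hTnn : 0 ≤ Tv := Finset.sum_nonneg fun i _ => by
      have := hw i
      positivity
    have key : ∀ t : ℝ, 0 ≤ 2*t*S + t^2*Tv := by
      intro t
      have hdeg2 : (Qhat k + t • R).natDegree ≤ k :=
        le_trans (natDegree_add_le _ _) (max_le hQd ((natDegree_smul_le t R).trans hRd))
      have hfeas := hQmin k hk1 hkn (Qhat k + t • R) hdeg2 (by simp [hQ0e, hR0])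
      rw [hobj, hobj] at hfeas
      have hexp : ∀ i : Fin n, w i * (((Qhat k) + t • R).eval (lam i))^2
          = w i * ((Qhat k).eval (lam i))^2
            + (2*t*(w i * (Qhat k).eval (lam i) * R.eval (lam i)) + t^2*(w i * (R.eval (lam i))^2)) := by
        intro i
        simp only [eval_add, eval_smul, smul_eq_mul]
        ring
      rw [Finset.sum_congr rfl (fun i _ => hexp i), Finset.sum_add_distrib,
        Finset.sum_add_distrib, ← Finset.mul_sum, ← Finset.mul_sum, ← hS, ← hTv] at hfeas
      linarith
    by_contra hSne
    have hT1 : (0:ℝ) < Tv + 1 := by linarith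
    set t := -S/(Tv+1) with ht
    have hk2 := key t
    have hmul : (2*t*S + t^2*Tv) * ((Tv+1)*(Tv+1)) = -(S^2)*(Tv+2) := by
      rw [ht]
      field_simp
      ring
    have h3 : 0 ≤ (2*t*S + t^2*Tv) * ((Tv+1)*(Tv+1)) := mul_nonneg hk2 (by positivity)
    rw [hmul] at h3
    have hSsq : 0 < S^2 := by positivity
    nlinarith
  have := key_sign hk1 hkn lam hanti hpos w hw (Qhat k) hQd hQ0e horth ⟨0, by omega⟩ rfl
  constructor
  · intro hodd
    have := this.1 hodd
    linarith
  · intro heven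
    have := this.2 heven
    linarith
end

section
/- Let 0 < a < b and k ≥ 1, and set C = b/a and ρ = (√C − 1)/(√C + 1). Then there exists a real polynomial Q of degree at most k with Q(0) = 1 such that |Q(t)| ≤ 2ρ^k for every t ∈ [a, b]. (The polynomial can be taken to be the normalized shifted Chebyshev polynomial Q(t) = C_k(1 + 2(t−b)/(b−a)) / C_k(1 + 2(0−b)/(b−a)), where C_k is the k-th Chebyshev polynomial of the first kind.) -/
open Polynomial Polynomial.Chebyshev

lemma natDegree_T_le' (n : ℕ) : (T ℝ (n : ℤ)).natDegree ≤ n := by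
  induction n using Nat.strong_induction_on with
  | _ n ih =>
    match n with
    | 0 => simp [T_zero]
    | 1 => simp [T_one]
    | (m+2) =>
      have h1 := ih (m+1) (by omega)
      have h0 := ih m (by omega)
      rw [show ((m+2 : ℕ) : ℤ) = (m:ℤ) + 2 by push_cast; ring, T_add_two]
      refine le_trans (natDegree_sub_le _ _) ?_
      have hX : (2 * X * T ℝ ((m:ℤ)+1)).natDegree ≤ m + 2 := by
        refine le_trans (natDegree_mul_le) ?_
        have h2 : (2 * X : ℝ[X]).natDegree ≤ 1 := by
          refine le_trans (natDegree_mul_le) ?_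
          simp
        have h1' : (T ℝ ((m:ℤ)+1)).natDegree ≤ m + 1 := by
          rwa [show ((m:ℤ)+1) = ((m+1 : ℕ) : ℤ) by push_cast; ring]
        omega
      have h0' : (T ℝ (m:ℤ)).natDegree ≤ m := h0
      simp only [max_le_iff]
      exact ⟨hX, by omega⟩

lemma T_eval_half' (z : ℝ) (hz : z ≠ 0) (n : ℕ) :
    (T ℝ (n : ℤ)).eval ((z + z⁻¹)/2) = (z^n + z⁻¹^n)/2 := by
  induction n using Nat.strong_induction_on with
  | _ n ih =>
    match n with
    | 0 => simp [T_zero]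
    | 1 => simp [T_one]
    | (m+2) =>
      have h1 := ih (m+1) (by omega)
      have h0 := ih m (by omega)
      rw [show ((m+2 : ℕ) : ℤ) = (m:ℤ) + 2 by push_cast; ring, T_add_two]
      rw [show ((m:ℤ)+1) = ((m+1 : ℕ) : ℤ) by push_cast; ring] at *
      simp only [eval_sub, eval_mul, eval_X, eval_ofNat, h1, h0]
      have hzz : z * z⁻¹ = 1 := mul_inv_cancel₀ hz
      linear_combination ((z⁻¹)^m + z^m)/2 * hzz

lemma abs_T_eval_le' (x : ℝ) (hx1 : -1 ≤ x) (hx2 : x ≤ 1) (n : ℤ) :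
    |(T ℝ n).eval x| ≤ 1 := by
  have h : Real.cos (Real.arccos x) = x := Real.cos_arccos hx1 hx2
  rw [← h, T_real_cos]
  exact Real.abs_cos_le_one _

/-- for 0 < a < b, k ≥ 1, C = b/a and ρ = (√C − 1)/(√C + 1), there is a
real polynomial Q of degree ≤ k with Q(0) = 1 such that |Q(t)| ≤ 2ρ^k on [a, b]
(e.g. the normalized shifted Chebyshev polynomial). -/
theorem stmt14 (a b : ℝ) (ha : 0 < a) (hab : a < b) (k : ℕ) (hk : 1 ≤ k) :
    ∃ Q : Polynomial ℝ, Q.natDegree ≤ k ∧ Q.eval 0 = 1 ∧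
      ∀ t ∈ Set.Icc a b,
        |Q.eval t| ≤ 2 * ((Real.sqrt (b / a) - 1) / (Real.sqrt (b / a) + 1)) ^ k := by
  have hba : (0:ℝ) < b - a := by linarith
  set s := Real.sqrt (b / a) with hs_def
  have hCa : 1 < b / a := (one_lt_div ha).mpr hab
  have hs1 : 1 < s := by
    have := Real.sqrt_lt_sqrt (by norm_num) hCa
    simpa using this
  have hs0 : 0 < s := by linarith
  have hs_sq : s ^ 2 = b / a := Real.sq_sqrt (by positivity)
  set ρ : ℝ := (s - 1) / (s + 1) with hρ_def
  have hρ0 : 0 < ρ := by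
    apply div_pos <;> linarith
  set z : ℝ := (s + 1) / (s - 1) with hz_def
  have hz1 : 1 < z := by
    rw [hz_def, lt_div_iff₀ (by linarith)]
    linarith
  have hz0 : 0 < z := by linarith
  have hzρ : z⁻¹ = ρ := by
    rw [hz_def, hρ_def, inv_div]
  set μ : ℝ := (a + b) / (b - a) with hμ_def
  have hμz : (z + z⁻¹) / 2 = μ := by
    rw [hzρ, hz_def, hρ_def, hμ_def]
    have h1 : s - 1 ≠ 0 := by linarith
    have h2 : s + 1 ≠ 0 := by linarith
    have hab' : b = a * s ^ 2 := by
      field_simp [ne_of_gt ha] at hs_sq ⊢; linarith [hs_sq]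
    have hne : a * s ^ 2 - a ≠ 0 := by
      rw [← hab']; exact ne_of_gt hba
    rw [hab']
    have ha' : a ≠ 0 := ne_of_gt ha
    have h3 : s ^ 2 - 1 ≠ 0 := by nlinarith
    field_simp
    ring
  set D : ℝ := (T ℝ (k : ℤ)).eval μ with hD_def
  have hDval : D = (z ^ k + ρ ^ k) / 2 := by
    rw [hD_def, ← hμz, T_eval_half' z (ne_of_gt hz0), hzρ]
  have hzk1 : 1 ≤ z ^ k := one_le_pow₀ (le_of_lt hz1)
  have hD0 : 0 < D := by
    rw [hDval]; positivity
  have hDge : z ^ k / 2 ≤ D := by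
    rw [hDval]
    have : 0 < ρ ^ k := by positivity
    linarith
  have hDinv : D⁻¹ ≤ 2 * ρ ^ k := by
    have h1 : D⁻¹ ≤ (z ^ k / 2)⁻¹ := by
      apply inv_anti₀ (by positivity) hDge
    have h2 : (z ^ k / 2)⁻¹ = 2 * (z⁻¹) ^ k := by
      rw [inv_div, inv_pow]
      ring
    rw [h2, hzρ] at h1
    exact h1
  set p : ℝ[X] := Polynomial.C (-(2 / (b - a))) * X + Polynomial.C μ with hp_def
  have hp_eval : ∀ t : ℝ, p.eval t = (a + b - 2 * t) / (b - a) := by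
    intro t
    simp [hp_def, hμ_def]
    field_simp
    ring
  refine ⟨Polynomial.C D⁻¹ * (T ℝ (k : ℤ)).comp p, ?_, ?_, ?_⟩
  · refine le_trans (natDegree_mul_le) ?_
    have hC : (Polynomial.C D⁻¹).natDegree = 0 := natDegree_C _
    have hcomp : ((T ℝ (k : ℤ)).comp p).natDegree ≤ k := by
      refine le_trans (natDegree_comp_le) ?_
      have hT := natDegree_T_le' k
      have hplin : p.natDegree ≤ 1 := natDegree_linear_le
      calc (T ℝ (k : ℤ)).natDegree * p.natDegree ≤ k * 1 :=
            Nat.mul_le_mul hT hplin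
        _ = k := by ring
    omega
  · have : p.eval 0 = μ := by rw [hp_eval]; rw [hμ_def]; ring_nf
    simp only [eval_mul, eval_C, eval_comp, this, ← hD_def]
    exact inv_mul_cancel₀ (ne_of_gt hD0)
  · intro t ht
    obtain ⟨hta, htb⟩ := ht
    set x : ℝ := p.eval t with hx_def
    have hx1 : -1 ≤ x := by
      rw [hx_def, hp_eval, le_div_iff₀ hba]
      linarith
    have hx2 : x ≤ 1 := by
      rw [hx_def, hp_eval, div_le_one hba]
      linarith
    have hTb := abs_T_eval_le' x hx1 hx2 (k : ℤ)
    simp only [eval_mul, eval_C, eval_comp, ← hx_def, abs_mul, abs_inv,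
      abs_of_pos hD0]
    calc D⁻¹ * |(T ℝ (k : ℤ)).eval x| ≤ D⁻¹ * 1 := by
          apply mul_le_mul_of_nonneg_left hTb (by positivity)
      _ = D⁻¹ := by ring
      _ ≤ 2 * ρ ^ k := hDinv
end

section
/- For every 1 ≤ k < n and every 1 ≤ i ≤ n, the noisy and noise-free minimizing residual polynomials satisfy |Q̂_k(λ_i) − Q*_k(λ_i)| ≤ 2 · ( max_{(j_1,…,j_k)∈I_k^+} | 1 − (p̂_{j_1}²⋯p̂_{j_k}²)/(p_{j_1}²⋯p_{j_k}²) | ) · ( max_{(j_1,…,j_k)∈I_k^+} ∏_{l=1}^k |λ_i/λ_{j_l} − 1| ). -/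
open Matrix Polynomial Finset

namespace Stmt17Aux

/-- quadratic nonnegativity forces vanishing linear term -/
lemma quad_nonneg {b c : ℝ} (hc : 0 ≤ c) (h : ∀ t : ℝ, 0 ≤ 2 * t * b + t ^ 2 * c) :
    b = 0 := by
  by_contra hb
  have hc1 : (0:ℝ) < c + 1 := by linarith
  have h1 := h (-b / (c + 1))
  have h2 : 2 * (-b / (c + 1)) * b + (-b / (c + 1)) ^ 2 * c
      = -(b ^ 2 * (c + 2)) / (c + 1) ^ 2 := by
    field_simp
    ring
  rw [h2] at h1
  have hb2 : 0 < b ^ 2 := by positivity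
  have : 0 < b ^ 2 * (c + 2) / (c + 1) ^ 2 := by positivity
  rw [neg_div] at h1
  linarith

variable {N : ℕ}

noncomputable def Vsq (lam : Fin N → ℝ) (s : Finset (Fin N)) : ℝ :=
  ∏ p ∈ s.offDiag, |lam p.1 - lam p.2|

lemma Vsq_pos (lam : Fin N → ℝ) (hinj : Function.Injective lam) (s : Finset (Fin N)) :
    0 < Vsq lam s := by
  apply Finset.prod_pos
  rintro ⟨a, b⟩ hab
  rw [Finset.mem_offDiag] at hab
  exact abs_pos.2 (sub_ne_zero.2 fun h => hab.2.2 (hinj h))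

lemma Vsq_insert (lam : Fin N → ℝ) {a : Fin N} {s : Finset (Fin N)} (ha : a ∉ s) :
    Vsq lam (insert a s) = Vsq lam s * ∏ x ∈ s, (lam x - lam a) ^ 2 := by
  have hd1 : Disjoint (s.offDiag ∪ {a} ×ˢ s) (s ×ˢ {a}) := by
    rw [Finset.disjoint_left]
    rintro ⟨x, y⟩ hxy hxy'
    simp only [Finset.mem_union, Finset.mem_offDiag, Finset.mem_product,
      Finset.mem_singleton] at hxy hxy'
    rcases hxy with h | h
    · exact ha (hxy'.2 ▸ h.2.1)
    · exact ha (hxy'.2 ▸ h.2)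
  have hd2 : Disjoint s.offDiag ({a} ×ˢ s) := by
    rw [Finset.disjoint_left]
    rintro ⟨x, y⟩ hxy hxy'
    simp only [Finset.mem_offDiag, Finset.mem_product, Finset.mem_singleton] at hxy hxy'
    exact ha (hxy'.1 ▸ hxy.1)
  unfold Vsq
  rw [Finset.offDiag_insert ha, Finset.prod_union hd1, Finset.prod_union hd2,
    Finset.prod_product, Finset.prod_product]
  simp only [Finset.prod_singleton]
  rw [mul_assoc, ← Finset.prod_mul_distrib]
  congr 1
  refine Finset.prod_congr rfl fun x _ => ?_
  rw [abs_sub_comm (lam a), ← abs_mul, ← sq, abs_sq]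

noncomputable def pis (lam : Fin N → ℝ) (s : Finset (Fin N)) : Polynomial ℝ :=
  ∏ j ∈ s, (1 - C (lam j)⁻¹ * X)

lemma pis_natDegree_le (lam : Fin N → ℝ) (s : Finset (Fin N)) :
    (pis lam s).natDegree ≤ s.card := by
  refine le_trans (natDegree_prod_le _ _) ?_
  calc ∑ j ∈ s, (1 - C (lam j)⁻¹ * X : Polynomial ℝ).natDegree
      ≤ ∑ _j ∈ s, 1 := by
        refine Finset.sum_le_sum fun j _ => ?_
        refine le_trans (natDegree_sub_le _ _) (max_le (by simp) ?_)
        exact le_trans (natDegree_C_mul_le _ _) natDegree_X.le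
    _ = s.card := by simp

lemma pis_eval_zero (lam : Fin N → ℝ) (s : Finset (Fin N)) :
    (pis lam s).eval 0 = 1 := by
  simp [pis, eval_prod]

lemma pis_eval (lam : Fin N → ℝ) (s : Finset (Fin N)) (x : ℝ) :
    (pis lam s).eval x = ∏ j ∈ s, (1 - (lam j)⁻¹ * x) := by
  simp [pis, eval_prod]

lemma pis_eval_mem (lam : Fin N → ℝ) {s : Finset (Fin N)} {t : Fin N}
    (hlam0 : lam t ≠ 0) (ht : t ∈ s) : (pis lam s).eval (lam t) = 0 := by
  rw [pis_eval]
  refine Finset.prod_eq_zero ht ?_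
  rw [inv_mul_cancel₀ hlam0, sub_self]


/-- Lagrange interpolation of `X^m` evaluated at `0` vanishes for `1 ≤ m < #S`. -/
lemma lag_zero (lam : Fin N → ℝ) (hinj : Function.Injective lam)
    (S : Finset (Fin N)) {m : ℕ} (hm1 : 1 ≤ m) (hm : m < S.card) :
    ∑ j ∈ S, lam j ^ m * ∏ x ∈ S.erase j, (lam x / (lam x - lam j)) = 0 := by
  have hf : ((X : Polynomial ℝ) ^ m).degree < S.card := by
    rw [degree_X_pow]
    exact_mod_cast hm
  have h := Lagrange.eq_interpolate (v := lam) (s := S) hinj.injOn hf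
  have h0 := congrArg (Polynomial.eval 0) h
  rw [eval_pow, eval_X, zero_pow (by omega : m ≠ 0), Lagrange.interpolate_apply,
    eval_finset_sum] at h0
  have hterm : ∀ j ∈ S, (C (Polynomial.eval (lam j) ((X:Polynomial ℝ) ^ m)) *
      Lagrange.basis S lam j).eval 0
      = lam j ^ m * ∏ x ∈ S.erase j, (lam x / (lam x - lam j)) := by
    intro j hj
    rw [eval_mul, eval_C, eval_pow, eval_X]
    congr 1
    unfold Lagrange.basis
    rw [eval_prod]
    refine Finset.prod_congr rfl fun x hx => ?_
    have hxj : lam x ≠ lam j := fun h =>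
      (Finset.ne_of_mem_erase hx) (hinj h)
    unfold Lagrange.basisDivisor
    rw [eval_mul, eval_C, eval_sub, eval_X, eval_C]
    have h1 : lam j - lam x ≠ 0 := sub_ne_zero.2 (Ne.symm hxj)
    have h2 : lam x - lam j ≠ 0 := sub_ne_zero.2 hxj
    field_simp
    ring
  rw [Finset.sum_congr rfl hterm] at h0
  exact h0.symm

noncomputable def cw (lam w : Fin N → ℝ) (s : Finset (Fin N)) : ℝ :=
  (∏ x ∈ s, w x * lam x ^ 2) * Vsq lam s

lemma cw_pos (lam w : Fin N → ℝ) (hinj : Function.Injective lam)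
    (hlam0 : ∀ j, lam j ≠ 0) (hw : ∀ j, 0 < w j) (s : Finset (Fin N)) :
    0 < cw lam w s := by
  refine mul_pos (Finset.prod_pos fun x _ => mul_pos (hw x) ?_) (Vsq_pos lam hinj s)
  have := hlam0 x
  positivity

/-- the key cancellation: sum over `j ∈ S` of the weighted terms vanishes. -/
lemma inner_cancel (lam w : Fin N → ℝ) (hinj : Function.Injective lam)
    (hlam0 : ∀ j, lam j ≠ 0) (S : Finset (Fin N)) {m : ℕ} (hm1 : 1 ≤ m)
    (hm : m < S.card) :
    ∑ j ∈ S, w j * lam j ^ m * (cw lam w (S.erase j) * (pis lam (S.erase j)).eval (lam j))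
      = 0 := by
  set K : ℝ := (∏ x ∈ S, w x) * Vsq lam S with hK
  have key : ∀ j ∈ S,
      w j * lam j ^ m * (cw lam w (S.erase j) * (pis lam (S.erase j)).eval (lam j))
        = K * (lam j ^ m * ∏ x ∈ S.erase j, (lam x / (lam x - lam j))) := by
    intro j hj
    set s' := S.erase j with hs'
    have hins : insert j s' = S := Finset.insert_erase hj
    have hVs : Vsq lam S = Vsq lam s' * ∏ x ∈ s', (lam x - lam j) ^ 2 := by
      conv_lhs => rw [← hins]
      exact Vsq_insert lam (Finset.notMem_erase j S)
    have hwS : ∏ x ∈ S, w x = w j * ∏ x ∈ s', w x :=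
      (Finset.mul_prod_erase S w hj).symm
    have hprod : ∏ x ∈ s', (w x * lam x ^ 2 * (1 - (lam x)⁻¹ * lam j))
        = ∏ x ∈ s', (w x * ((lam x - lam j) ^ 2 * (lam x / (lam x - lam j)))) := by
      refine Finset.prod_congr rfl fun x hx => ?_
      have hx0 : lam x ≠ 0 := hlam0 x
      have hxj : lam x - lam j ≠ 0 := sub_ne_zero.2 fun h =>
        (Finset.ne_of_mem_erase hx) (hinj h)
      field_simp
    calc w j * lam j ^ m * (cw lam w s' * (pis lam s').eval (lam j))
        = w j * lam j ^ m * (Vsq lam s' *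
            ((∏ x ∈ s', (w x * lam x ^ 2)) * ∏ x ∈ s', (1 - (lam x)⁻¹ * lam j))) := by
          rw [cw.eq_def, pis_eval]; ring
      _ = w j * lam j ^ m * (Vsq lam s' *
            ∏ x ∈ s', (w x * lam x ^ 2 * (1 - (lam x)⁻¹ * lam j))) := by
          rw [← Finset.prod_mul_distrib]
      _ = w j * lam j ^ m * (Vsq lam s' *
            ((∏ x ∈ s', w x) * ((∏ x ∈ s', (lam x - lam j) ^ 2) *
              ∏ x ∈ s', (lam x / (lam x - lam j))))) := by
          rw [hprod, Finset.prod_mul_distrib, Finset.prod_mul_distrib]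
      _ = K * (lam j ^ m * ∏ x ∈ s', (lam x / (lam x - lam j))) := by
          rw [hK, hVs, hwS]; ring
  rw [Finset.sum_congr rfl key, ← Finset.mul_sum, lag_zero lam hinj S hm1 hm, mul_zero]


section Rp
variable (lam w : Fin N → ℝ) (k : ℕ)

noncomputable def Sc : ℝ :=
  ∑ s ∈ Finset.powersetCard k (Finset.univ : Finset (Fin N)), cw lam w s

noncomputable def Rp : Polynomial ℝ :=
  C (Sc lam w k)⁻¹ *
    ∑ s ∈ Finset.powersetCard k (Finset.univ : Finset (Fin N)), C (cw lam w s) * pis lam s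

variable {lam w k}

lemma Sc_pos (hinj : Function.Injective lam) (hlam0 : ∀ j, lam j ≠ 0)
    (hw : ∀ j, 0 < w j) (hkN : k ≤ N) : 0 < Sc lam w k := by
  refine Finset.sum_pos (fun s _ => cw_pos lam w hinj hlam0 hw s) ?_
  rw [Finset.powersetCard_nonempty]
  simpa using hkN

lemma Rp_natDegree_le : (Rp lam w k).natDegree ≤ k := by
  refine le_trans (natDegree_C_mul_le _ _) ?_
  refine natDegree_sum_le_of_forall_le _ _ fun s hs => ?_
  refine le_trans (natDegree_C_mul_le _ _) ?_
  rw [Finset.mem_powersetCard] at hs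
  exact le_trans (pis_natDegree_le lam s) hs.2.le

lemma Rp_eval_zero (hinj : Function.Injective lam) (hlam0 : ∀ j, lam j ≠ 0)
    (hw : ∀ j, 0 < w j) (hkN : k ≤ N) : (Rp lam w k).eval 0 = 1 := by
  have h := Sc_pos hinj hlam0 hw hkN (lam := lam) (w := w) (k := k)
  rw [Rp, eval_mul, eval_C, eval_finset_sum]
  have hc : ∀ s ∈ Finset.powersetCard k (Finset.univ : Finset (Fin N)),
      (C (cw lam w s) * pis lam s).eval 0 = cw lam w s := by
    intro s _
    rw [eval_mul, eval_C, pis_eval_zero, mul_one]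
  rw [Finset.sum_congr rfl hc]
  exact inv_mul_cancel₀ (ne_of_gt h)

lemma Rp_eval (x : ℝ) : (Rp lam w k).eval x
    = (Sc lam w k)⁻¹ * ∑ s ∈ Finset.powersetCard k (Finset.univ : Finset (Fin N)),
        cw lam w s * (pis lam s).eval x := by
  rw [Rp, eval_mul, eval_C, eval_finset_sum]
  congr 1
  exact Finset.sum_congr rfl fun s _ => by rw [eval_mul, eval_C]

lemma Rp_ortho (hinj : Function.Injective lam) (hlam0 : ∀ j, lam j ≠ 0)
    (hw : ∀ j, 0 < w j) (hkN : k < N) {m : ℕ} (hm1 : 1 ≤ m) (hmk : m ≤ k) :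
    ∑ t, w t * lam t ^ m * (Rp lam w k).eval (lam t) = 0 := by
  classical
  set Pk := Finset.powersetCard k (Finset.univ : Finset (Fin N)) with hPk
  set F : Finset (Fin N) → Fin N → ℝ :=
    fun s t => w t * lam t ^ m * (cw lam w s * (pis lam s).eval (lam t)) with hF
  have expand : ∀ t, w t * lam t ^ m * (Rp lam w k).eval (lam t)
      = (Sc lam w k)⁻¹ * ∑ s ∈ Pk, F s t := by
    intro t
    rw [Rp_eval]
    simp only [hF, Finset.mul_sum]
    exact Finset.sum_congr rfl fun s _ => by ring
  have main : ∑ t, ∑ s ∈ Pk, F s t = 0 := by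
    rw [Finset.sum_comm]
    have hrestrict : ∀ s ∈ Pk, ∑ t, F s t = ∑ t ∈ sᶜ, F s t := by
      intro s _
      refine (Finset.sum_subset (Finset.subset_univ _) fun t _ ht => ?_).symm
      rw [Finset.mem_compl, not_not] at ht
      simp only [hF]
      rw [pis_eval_mem lam (hlam0 t) ht, mul_zero, mul_zero]
    rw [Finset.sum_congr rfl hrestrict, Finset.sum_sigma']
    have reindex : ∑ p ∈ Pk.sigma (fun s => sᶜ), F p.1 p.2
        = ∑ p ∈ (Finset.powersetCard (k+1) (Finset.univ : Finset (Fin N))).sigma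
            (fun S => S), F (p.1.erase p.2) p.2 := by
      refine Finset.sum_nbij' (fun p => ⟨insert p.2 p.1, p.2⟩)
        (fun p => ⟨p.1.erase p.2, p.2⟩) ?_ ?_ ?_ ?_ ?_
      · rintro ⟨s, t⟩ hp
        simp only [hPk, Finset.mem_sigma, Finset.mem_powersetCard, Finset.subset_univ,
          true_and, Finset.mem_compl] at hp ⊢
        exact ⟨by rw [Finset.card_insert_of_notMem hp.2, hp.1], Finset.mem_insert_self _ _⟩
      · rintro ⟨S, t⟩ hp
        simp only [hPk, Finset.mem_sigma, Finset.mem_powersetCard, Finset.subset_univ,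
          true_and, Finset.mem_compl] at hp ⊢
        exact ⟨by rw [Finset.card_erase_of_mem hp.2, hp.1]; omega, Finset.notMem_erase _ _⟩
      · rintro ⟨s, t⟩ hp
        simp only [hPk, Finset.mem_sigma, Finset.mem_powersetCard, Finset.subset_univ,
          true_and, Finset.mem_compl] at hp
        simp [Finset.erase_insert hp.2]
      · rintro ⟨S, t⟩ hp
        simp only [hPk, Finset.mem_sigma, Finset.mem_powersetCard, Finset.subset_univ,
          true_and, Finset.mem_compl] at hp
        simp [Finset.insert_erase hp.2]
      · rintro ⟨s, t⟩ hp
        simp only [hPk, Finset.mem_sigma, Finset.mem_powersetCard, Finset.subset_univ,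
          true_and, Finset.mem_compl] at hp
        simp [Finset.erase_insert hp.2]
    rw [reindex, Finset.sum_sigma]
    have hz : ∀ S ∈ Finset.powersetCard (k+1) (Finset.univ : Finset (Fin N)),
        (∑ t ∈ S, F (S.erase t) t) = 0 := by
      intro S hS
      rw [Finset.mem_powersetCard] at hS
      have := inner_cancel lam w hinj hlam0 S hm1 (m := m) (by omega)
      simpa [hF] using this
    rw [Finset.sum_congr rfl hz, Finset.sum_const_zero]
  rw [Finset.sum_congr rfl fun t _ => expand t, ← Finset.mul_sum, main, mul_zero]

end Rp
section Char
variable {lam w : Fin N → ℝ} {k : ℕ}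

/-- a minimizer of the weighted least-squares functional satisfies the orthogonality
relations against monomials `X^m`, `1 ≤ m ≤ k`. -/
lemma ortho_of_min (hw : ∀ j, 0 < w j) {Q : Polynomial ℝ}
    (hdeg : Q.natDegree ≤ k) (h0 : Q.eval 0 = 1)
    (hmin : ∀ P : Polynomial ℝ, P.natDegree ≤ k → P.eval 0 = 1 →
      ∑ t, w t * (Q.eval (lam t)) ^ 2 ≤ ∑ t, w t * (P.eval (lam t)) ^ 2)
    {m : ℕ} (hm1 : 1 ≤ m) (hmk : m ≤ k) :
    ∑ t, w t * lam t ^ m * Q.eval (lam t) = 0 := by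
  set b : ℝ := ∑ t, w t * lam t ^ m * Q.eval (lam t) with hb
  set c : ℝ := ∑ t, w t * (lam t ^ m) ^ 2 with hc
  have hcpos : 0 ≤ c := Finset.sum_nonneg fun t _ => mul_nonneg (hw t).le (sq_nonneg _)
  refine quad_nonneg hcpos fun tt => ?_
  have hdeg' : (Q + C tt * X ^ m).natDegree ≤ k := by
    refine le_trans (natDegree_add_le _ _) (max_le hdeg ?_)
    exact le_trans (natDegree_C_mul_le _ _) (by rw [natDegree_X_pow]; exact hmk)
  have h0' : (Q + C tt * X ^ m).eval 0 = 1 := by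
    rw [eval_add, eval_mul, eval_C, eval_pow, eval_X, zero_pow (by omega : m ≠ 0),
      mul_zero, add_zero, h0]
  have hle := hmin _ hdeg' h0'
  have hexp : ∑ t, w t * ((Q + C tt * X ^ m).eval (lam t)) ^ 2
      = (∑ t, w t * (Q.eval (lam t)) ^ 2) + (2 * tt * b + tt ^ 2 * c) := by
    rw [hb, hc, Finset.mul_sum, Finset.mul_sum, ← Finset.sum_add_distrib,
      ← Finset.sum_add_distrib]
    refine Finset.sum_congr rfl fun t _ => ?_
    rw [eval_add, eval_mul, eval_C, eval_pow, eval_X]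
    ring
  rw [hexp] at hle
  linarith

/-- orthogonality + normalization + degree bound pins down the polynomial. -/
lemma eq_Rp_of_ortho (hinj : Function.Injective lam) (hlam0 : ∀ j, lam j ≠ 0)
    (hw : ∀ j, 0 < w j) (hkN : k < N) (hk1 : 1 ≤ k) {Q : Polynomial ℝ}
    (hdeg : Q.natDegree ≤ k) (h0 : Q.eval 0 = 1)
    (horth : ∀ m : ℕ, 1 ≤ m → m ≤ k → ∑ t, w t * lam t ^ m * Q.eval (lam t) = 0) :
    Q = Rp lam w k := by
  set D : Polynomial ℝ := Q - Rp lam w k with hD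
  have hD0 : D.eval 0 = 0 := by
    rw [hD, eval_sub, h0, Rp_eval_zero hinj hlam0 hw hkN.le, sub_self]
  have hDdeg : D.natDegree ≤ k :=
    le_trans (natDegree_sub_le _ _) (max_le hdeg Rp_natDegree_le)
  have hDorth : ∀ m : ℕ, 1 ≤ m → m ≤ k →
      ∑ t, w t * lam t ^ m * D.eval (lam t) = 0 := by
    intro m hm1 hmk
    have h1 := horth m hm1 hmk
    have h2 := Rp_ortho hinj hlam0 hw hkN hm1 hmk
    calc ∑ t, w t * lam t ^ m * D.eval (lam t)
        = (∑ t, w t * lam t ^ m * Q.eval (lam t))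
          - ∑ t, w t * lam t ^ m * (Rp lam w k).eval (lam t) := by
          rw [← Finset.sum_sub_distrib]
          refine Finset.sum_congr rfl fun t _ => by rw [hD, eval_sub]; ring
      _ = 0 := by rw [h1, h2, sub_zero]
  -- D vanishes at all nodes
  have hXdvd : X ∣ D := X_dvd_iff.2 (by rw [coeff_zero_eq_eval_zero, hD0])
  obtain ⟨E, hE⟩ := hXdvd
  have hEdeg : E.natDegree ≤ k - 1 := by
    rcases eq_or_ne E 0 with h | h
    · simp [h]
    · have : D.natDegree = 1 + E.natDegree := by
        rw [hE, natDegree_mul X_ne_zero h, natDegree_X]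
      omega
  have hsum0 : ∑ t, w t * (D.eval (lam t)) ^ 2 = 0 := by
    have hDev : ∀ t, D.eval (lam t) = lam t * E.eval (lam t) := by
      intro t; rw [hE, eval_mul, eval_X]
    have hEev : ∀ t, E.eval (lam t)
        = ∑ m ∈ Finset.range k, E.coeff m * lam t ^ m := by
      intro t
      exact eval_eq_sum_range' (by omega) _
    calc ∑ t, w t * (D.eval (lam t)) ^ 2
        = ∑ t, w t * lam t * E.eval (lam t) * D.eval (lam t) := by
          refine Finset.sum_congr rfl fun t _ => ?_
          rw [hDev t]; ring
      _ = ∑ t, ∑ m ∈ Finset.range k, E.coeff m *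
            (w t * lam t ^ (m + 1) * D.eval (lam t)) := by
          refine Finset.sum_congr rfl fun t _ => ?_
          rw [hEev t, Finset.mul_sum, Finset.sum_mul]
          exact Finset.sum_congr rfl fun m _ => by ring
      _ = ∑ m ∈ Finset.range k, E.coeff m *
            ∑ t, w t * lam t ^ (m + 1) * D.eval (lam t) := by
          rw [Finset.sum_comm]
          exact Finset.sum_congr rfl fun m _ => by rw [Finset.mul_sum]
      _ = 0 := by
          refine Finset.sum_eq_zero fun m hm => ?_
          rw [Finset.mem_range] at hm
          rw [hDorth (m + 1) (by omega) (by omega), mul_zero]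
  have hDnodes : ∀ t, D.eval (lam t) = 0 := by
    have := (Finset.sum_eq_zero_iff_of_nonneg
      (fun t _ => mul_nonneg (hw t).le (sq_nonneg _) : ∀ t ∈ Finset.univ, 0 ≤ w t * (D.eval (lam t)) ^ 2)).1 hsum0
    intro t
    have ht := this t (Finset.mem_univ t)
    have hwt := hw t
    have : (D.eval (lam t)) ^ 2 = 0 := by
      by_contra hne
      have : 0 < (D.eval (lam t)) ^ 2 := lt_of_le_of_ne (sq_nonneg _) (Ne.symm hne)
      nlinarith
    exact pow_eq_zero_iff (by norm_num : (2:ℕ) ≠ 0) |>.1 this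
  have hDzero : D = 0 := by
    refine Polynomial.eq_zero_of_natDegree_lt_card_of_eval_eq_zero D hinj hDnodes ?_
    rw [Fintype.card_fin]
    omega
  have hQR : Q - Rp lam w k = 0 := by rw [← hD]; exact hDzero
  exact sub_eq_zero.1 hQR

end Char
section Spectral
variable {n : ℕ} (lam : Fin n → ℝ) (u : Fin n → Fin n → ℝ)

/-- reduction of the matrix least-squares functional to a weighted sum. -/
lemma sum_sq_reduce (M : Matrix (Fin n) (Fin n) ℝ)
    (hortho : ∀ i j, u i ⬝ᵥ u j = if i = j then (1 : ℝ) else 0)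
    (hspec : M = ∑ i, lam i • vecMulVec (u i) (u i))
    (Q : Polynomial ℝ) (Y : Fin n → ℝ) :
    ∑ i, (((Polynomial.aeval M) Q *ᵥ Y) i) ^ 2
      = ∑ j, (u j ⬝ᵥ Y) ^ 2 * (Q.eval (lam j)) ^ 2 := by
  classical
  set U : Matrix (Fin n) (Fin n) ℝ := Matrix.of u with hU
  have hUUt : U * Uᵀ = 1 := by
    ext a b
    rw [Matrix.mul_apply, Matrix.one_apply]
    simpa [dotProduct, hU] using hortho a b
  have hUtU : Uᵀ * U = 1 := mul_eq_one_comm.1 hUUt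
  have hMu : ∀ j, M *ᵥ u j = lam j • u j := by
    intro j
    rw [hspec]
    ext a
    simp only [Matrix.mulVec, dotProduct, Finset.sum_apply, Matrix.sum_apply,
      Matrix.smul_apply, Matrix.vecMulVec_apply, smul_eq_mul]
    calc ∑ x, (∑ y, lam y * (u y a * u y x)) * u j x
        = ∑ x, ∑ y, lam y * (u y a * u y x) * u j x :=
          Finset.sum_congr rfl fun x _ => Finset.sum_mul _ _ _
      _ = ∑ y, ∑ x, lam y * (u y a * u y x) * u j x := Finset.sum_comm
      _ = ∑ y, lam y * u y a * (u y ⬝ᵥ u j) := by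
          refine Finset.sum_congr rfl fun y _ => ?_
          rw [dotProduct, Finset.mul_sum]
          exact Finset.sum_congr rfl fun x _ => by ring
      _ = (lam j • u j) a := by
          rw [Finset.sum_congr rfl fun y _ => by rw [hortho y j]]
          simp [mul_ite, Finset.sum_ite_eq', Pi.smul_apply, mul_comm]
  have hMpow : ∀ (d : ℕ) (j : Fin n), (M ^ d) *ᵥ u j = (lam j ^ d) • u j := by
    intro d
    induction d with
    | zero => intro j; simp [Matrix.one_mulVec]
    | succ d ih =>
      intro j
      rw [pow_succ', ← Matrix.mulVec_mulVec, ih j, Matrix.mulVec_smul, hMu j,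
        smul_smul, ← pow_succ]
  have haeval : ∀ (Q : Polynomial ℝ) (j : Fin n),
      (Polynomial.aeval M Q) *ᵥ u j = (Q.eval (lam j)) • u j := by
    intro Q
    induction Q using Polynomial.induction_on' with
    | add p q hp hq =>
      intro j
      rw [map_add, Matrix.add_mulVec, hp j, hq j, eval_add, add_smul]
    | monomial d a =>
      intro j
      rw [Polynomial.aeval_monomial, eval_monomial, Algebra.algebraMap_eq_smul_one,
        smul_mul_assoc, one_mul, Matrix.smul_mulVec, hMpow d j, smul_smul]
  -- expansion of Y in the basis
  have hYexp : ∀ v : Fin n → ℝ, v = ∑ j, (u j ⬝ᵥ v) • u j := by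
    intro v
    have h1 : Uᵀ *ᵥ (U *ᵥ v) = v := by
      rw [Matrix.mulVec_mulVec, hUtU, Matrix.one_mulVec]
    have h2 : Uᵀ *ᵥ (U *ᵥ v) = ∑ j, (u j ⬝ᵥ v) • u j := by
      ext a
      simp only [Matrix.mulVec, dotProduct, Matrix.transpose_apply,
        Finset.sum_apply, Pi.smul_apply, smul_eq_mul, hU, Matrix.of_apply]
      exact Finset.sum_congr rfl fun j _ => by ring
    conv_lhs => rw [← h1]
    exact h2
  -- main computation
  have hAY : (Polynomial.aeval M Q) *ᵥ Y
      = ∑ j, ((u j ⬝ᵥ Y) * Q.eval (lam j)) • u j := by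
    conv_lhs => rw [hYexp Y]
    have := map_sum (Matrix.mulVecLin (Polynomial.aeval M Q))
      (fun j => (u j ⬝ᵥ Y) • u j) Finset.univ
    rw [← Matrix.mulVecLin_apply, this]
    refine Finset.sum_congr rfl fun j _ => ?_
    rw [_root_.map_smul, Matrix.mulVecLin_apply, haeval Q j, smul_smul]
  rw [hAY]
  -- sum of squares of an orthonormal expansion
  set c : Fin n → ℝ := fun j => (u j ⬝ᵥ Y) * Q.eval (lam j) with hc
  have hv : (∑ j, c j • u j) = Uᵀ *ᵥ c := by
    ext a
    simp only [Matrix.mulVec, dotProduct, Matrix.transpose_apply,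
      Finset.sum_apply, Pi.smul_apply, smul_eq_mul, hU, Matrix.of_apply]
    exact Finset.sum_congr rfl fun j _ => by ring
  rw [hv]
  have hdot : (Uᵀ *ᵥ c) ⬝ᵥ (Uᵀ *ᵥ c) = c ⬝ᵥ c := by
    rw [dotProduct_mulVec, Matrix.vecMul_transpose, Matrix.mulVec_mulVec,
      hUUt, Matrix.one_mulVec]
  have hsq : ∑ a, ((Uᵀ *ᵥ c) a) ^ 2 = (Uᵀ *ᵥ c) ⬝ᵥ (Uᵀ *ᵥ c) := by
    rw [dotProduct]
    exact Finset.sum_congr rfl fun a _ => (pow_two _)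
  rw [hsq, hdot, dotProduct]
  refine Finset.sum_congr rfl fun j _ => ?_
  simp only [hc]
  ring

end Spectral
section Tuples

lemma exists_tuple {k : ℕ} {s : Finset (Fin N)} (hs : s.card = k) :
    ∃ j : Fin k → Fin N, StrictAnti j ∧
      ∀ f : Fin N → ℝ, (∏ l, f (j l)) = ∏ x ∈ s, f x := by
  classical
  set e := s.orderIsoOfFin hs with he
  refine ⟨fun l => (e l.rev : Fin N), ?_, ?_⟩
  · intro a b hab
    have h1 : b.rev < a.rev := by rwa [Fin.rev_lt_rev]
    exact e.strictMono h1
  · intro f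
    rw [← Finset.prod_coe_sort s f]
    exact Equiv.prod_comp (Fin.revPerm.trans e.toEquiv) (fun x : s => f (x : Fin N))

end Tuples

end Stmt17Aux

open Stmt17Aux in
/-- the noisy and noise-free minimizing residual polynomials satisfy
|Q̂_k(λ_i) − Q*_k(λ_i)| ≤ 2 · max_{I_k^+} |1 − (p̂_{j_1}²⋯p̂_{j_k}²)/(p_{j_1}²⋯p_{j_k}²)|
· max_{I_k^+} ∏_l |λ_i/λ_{j_l} − 1| (maxima over strictly decreasing k-tuples,
expressed as suprema of the corresponding finite sets of values). -/
theorem stmt17 {n p : ℕ} (X : Matrix (Fin n) (Fin p) ℝ)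
    (βstar : Fin p → ℝ) (ε : Fin n → ℝ) (Y : Fin n → ℝ)
    (hY : Y = X *ᵥ βstar + ε)
    (lam : Fin n → ℝ) (u : Fin n → Fin n → ℝ)
    (hortho : ∀ i j, u i ⬝ᵥ u j = if i = j then (1 : ℝ) else 0)
    (hspec : X * Xᵀ = ∑ i, lam i • vecMulVec (u i) (u i))
    (hanti : StrictAnti lam) (hpos : ∀ i, 0 < lam i)
    (hp : ∀ i, u i ⬝ᵥ (X *ᵥ βstar) ≠ 0)
    (hphat : ∀ i, u i ⬝ᵥ Y ≠ 0)
    (Qhat Qstar : ℕ → Polynomial ℝ)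
    (hQhatmem : ∀ k, 1 ≤ k → k < n → (Qhat k).natDegree ≤ k ∧ (Qhat k).eval 0 = 1)
    (hQhatmin : ∀ k, 1 ≤ k → k < n → ∀ Q : Polynomial ℝ, Q.natDegree ≤ k → Q.eval 0 = 1 →
      ∑ i, (((Polynomial.aeval (X * Xᵀ)) (Qhat k) *ᵥ Y) i) ^ 2 ≤
        ∑ i, (((Polynomial.aeval (X * Xᵀ)) Q *ᵥ Y) i) ^ 2)
    (hQstarmem : ∀ k, 1 ≤ k → k < n → (Qstar k).natDegree ≤ k ∧ (Qstar k).eval 0 = 1)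
    (hQstarmin : ∀ k, 1 ≤ k → k < n → ∀ Q : Polynomial ℝ, Q.natDegree ≤ k → Q.eval 0 = 1 →
      ∑ i, (((Polynomial.aeval (X * Xᵀ)) (Qstar k) *ᵥ (X *ᵥ βstar)) i) ^ 2 ≤
        ∑ i, (((Polynomial.aeval (X * Xᵀ)) Q *ᵥ (X *ᵥ βstar)) i) ^ 2)
    (k : ℕ) (hk1 : 1 ≤ k) (hkn : k < n) (i : Fin n) :
    |(Qhat k).eval (lam i) - (Qstar k).eval (lam i)| ≤
      2 * sSup {r : ℝ | ∃ j : Fin k → Fin n, StrictAnti j ∧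
            r = |1 - (∏ l, (u (j l) ⬝ᵥ Y) ^ 2) / (∏ l, (u (j l) ⬝ᵥ (X *ᵥ βstar)) ^ 2)|}
        * sSup {r : ℝ | ∃ j : Fin k → Fin n, StrictAnti j ∧
            r = ∏ l, |lam i / lam (j l) - 1|} := by
  classical
  have hinj : Function.Injective lam := hanti.injective
  have hlam0 : ∀ j, lam j ≠ 0 := fun j => ne_of_gt (hpos j)
  set w : Fin n → ℝ := fun j => (u j ⬝ᵥ (X *ᵥ βstar)) ^ 2 with hw_def
  set what : Fin n → ℝ := fun j => (u j ⬝ᵥ Y) ^ 2 with hwhat_def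
  have hw : ∀ j, 0 < w j := fun j => by
    have := hp j; simp only [hw_def]; positivity
  have hwhat : ∀ j, 0 < what j := fun j => by
    have := hphat j; simp only [hwhat_def]; positivity
  have hred : ∀ (Q : Polynomial ℝ) (v : Fin n → ℝ),
      ∑ a, (((Polynomial.aeval (X * Xᵀ)) Q *ᵥ v) a) ^ 2
        = ∑ j, (u j ⬝ᵥ v) ^ 2 * (Q.eval (lam j)) ^ 2 :=
    fun Q v => sum_sq_reduce lam u (X * Xᵀ) hortho hspec Q v
  -- identify the minimizers with the explicit polynomials
  have hQhat_eq : Qhat k = Rp lam what k := by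
    refine eq_Rp_of_ortho hinj hlam0 hwhat hkn hk1 (hQhatmem k hk1 hkn).1
      (hQhatmem k hk1 hkn).2 ?_
    intro m hm1 hmk
    refine ortho_of_min hwhat (hQhatmem k hk1 hkn).1 (hQhatmem k hk1 hkn).2 ?_ hm1 hmk
    intro P hP1 hP2
    have := hQhatmin k hk1 hkn P hP1 hP2
    rw [hred, hred] at this
    exact this
  have hQstar_eq : Qstar k = Rp lam w k := by
    refine eq_Rp_of_ortho hinj hlam0 hw hkn hk1 (hQstarmem k hk1 hkn).1
      (hQstarmem k hk1 hkn).2 ?_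
    intro m hm1 hmk
    refine ortho_of_min hw (hQstarmem k hk1 hkn).1 (hQstarmem k hk1 hkn).2 ?_ hm1 hmk
    intro P hP1 hP2
    have := hQstarmin k hk1 hkn P hP1 hP2
    rw [hred, hred] at this
    exact this
  -- notation
  set Pk := Finset.powersetCard k (Finset.univ : Finset (Fin n)) with hPk
  set A : ℝ := Sc lam what k with hA
  set B : ℝ := Sc lam w k with hB
  have hApos : 0 < A := Sc_pos hinj hlam0 hwhat hkn.le
  have hBpos : 0 < B := Sc_pos hinj hlam0 hw hkn.le
  set sA : Set ℝ := {r : ℝ | ∃ j : Fin k → Fin n, StrictAnti j ∧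
      r = |1 - (∏ l, (u (j l) ⬝ᵥ Y) ^ 2) / (∏ l, (u (j l) ⬝ᵥ (X *ᵥ βstar)) ^ 2)|} with hsA
  set sB : Set ℝ := {r : ℝ | ∃ j : Fin k → Fin n, StrictAnti j ∧
      r = ∏ l, |lam i / lam (j l) - 1|} with hsB
  have hsA_fin : sA.Finite := by
    refine Set.Finite.subset (Set.toFinite ((fun j : Fin k → Fin n =>
      |1 - (∏ l, (u (j l) ⬝ᵥ Y) ^ 2) / (∏ l, (u (j l) ⬝ᵥ (X *ᵥ βstar)) ^ 2)|) '' Set.univ)) ?_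
    rintro r ⟨j, _, rfl⟩
    exact ⟨j, Set.mem_univ j, rfl⟩
  have hsB_fin : sB.Finite := by
    refine Set.Finite.subset (Set.toFinite ((fun j : Fin k → Fin n =>
      ∏ l, |lam i / lam (j l) - 1|) '' Set.univ)) ?_
    rintro r ⟨j, _, rfl⟩
    exact ⟨j, Set.mem_univ j, rfl⟩
  have hsA_bdd : BddAbove sA := hsA_fin.bddAbove
  have hsB_bdd : BddAbove sB := hsB_fin.bddAbove
  set δ : ℝ := sSup sA with hδ
  set Mx : ℝ := sSup sB with hMx
  -- ratio identity
  have hsplit : ∀ (w' : Fin n → ℝ) (s : Finset (Fin n)), cw lam w' s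
      = (∏ x ∈ s, w' x) * ((∏ x ∈ s, lam x ^ 2) * Vsq lam s) := by
    intro w' s
    rw [cw.eq_def, Finset.prod_mul_distrib]
    ring
  have hGpos : ∀ s : Finset (Fin n), 0 < (∏ x ∈ s, lam x ^ 2) * Vsq lam s := by
    intro s
    refine mul_pos (Finset.prod_pos fun x _ => ?_) (Vsq_pos lam hinj s)
    have := hlam0 x; positivity
  have hwprod_pos : ∀ s : Finset (Fin n), 0 < ∏ x ∈ s, w x :=
    fun s => Finset.prod_pos fun x _ => hw x
  -- membership bounds
  have hδ_ge : ∀ s ∈ Pk, |1 - cw lam what s / cw lam w s| ≤ δ := by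
    intro s hs
    rw [hPk, Finset.mem_powersetCard] at hs
    obtain ⟨j, hj, hjprod⟩ := exists_tuple hs.2
    have hratio : cw lam what s / cw lam w s
        = (∏ l, (u (j l) ⬝ᵥ Y) ^ 2) / (∏ l, (u (j l) ⬝ᵥ (X *ᵥ βstar)) ^ 2) := by
      rw [hsplit, hsplit, mul_div_mul_right _ _ (ne_of_gt (hGpos s)),
        hjprod what, hjprod w]
    refine le_csSup hsA_bdd ?_
    exact ⟨j, hj, by rw [hratio]⟩
  have hMx_ge : ∀ s ∈ Pk, |(pis lam s).eval (lam i)| ≤ Mx := by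
    intro s hs
    rw [hPk, Finset.mem_powersetCard] at hs
    obtain ⟨j, hj, hjprod⟩ := exists_tuple hs.2
    have : |(pis lam s).eval (lam i)| = ∏ l, |lam i / lam (j l) - 1| := by
      rw [pis_eval, Finset.abs_prod, ← hjprod (fun x => |1 - (lam x)⁻¹ * lam i|)]
      refine Finset.prod_congr rfl fun l _ => ?_
      rw [abs_sub_comm, inv_mul_eq_div]
    refine le_csSup hsB_bdd ?_
    exact ⟨j, hj, this⟩
  -- nonnegativity of sups
  obtain ⟨s₀, hs₀⟩ : Pk.Nonempty := by
    rw [hPk, Finset.powersetCard_nonempty]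
    simpa using hkn.le
  have hδ0 : 0 ≤ δ := le_trans (abs_nonneg _) (hδ_ge s₀ hs₀)
  have hMx0 : 0 ≤ Mx := le_trans (abs_nonneg _) (hMx_ge s₀ hs₀)
  -- coefficient bound
  have hcoef_bound : ∑ s ∈ Pk, |A⁻¹ * cw lam what s - B⁻¹ * cw lam w s| ≤ 2 * δ := by
    have hdiff : ∀ s ∈ Pk, |cw lam what s - cw lam w s| ≤ δ * cw lam w s := by
      intro s hs
      have hcpos := cw_pos lam w hinj hlam0 hw s
      have h1 : cw lam what s - cw lam w s
          = -(1 - cw lam what s / cw lam w s) * cw lam w s := by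
        field_simp
        ring
      rw [h1, abs_mul, abs_neg, abs_of_pos hcpos]
      exact mul_le_mul_of_nonneg_right (hδ_ge s hs) hcpos.le
    have hsum_diff : ∑ s ∈ Pk, |cw lam what s - cw lam w s| ≤ δ * B := by
      rw [hB, Sc.eq_def, ← hPk, Finset.mul_sum]
      exact Finset.sum_le_sum hdiff
    have hBA : |B - A| ≤ δ * B := by
      have : B - A = ∑ s ∈ Pk, (cw lam w s - cw lam what s) := by
        rw [hB, hA, Sc.eq_def, Sc.eq_def, ← hPk, Finset.sum_sub_distrib]
      rw [this]
      refine le_trans (Finset.abs_sum_le_sum_abs _ _) ?_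
      refine le_trans (Finset.sum_le_sum fun s hs => ?_) hsum_diff
      rw [abs_sub_comm]
    have hsumA : ∑ s ∈ Pk, A⁻¹ * cw lam what s = 1 := by
      rw [← Finset.mul_sum, hA, Sc.eq_def, ← hPk]
      exact inv_mul_cancel₀ (by rw [hA, Sc.eq_def, ← hPk] at hApos; exact ne_of_gt hApos)
    have hterm : ∀ s ∈ Pk, |A⁻¹ * cw lam what s - B⁻¹ * cw lam w s|
        ≤ (A⁻¹ * cw lam what s) * (|B - A| / B) + |cw lam what s - cw lam w s| / B := by
      intro s hs
      have hchat := cw_pos lam what hinj hlam0 hwhat s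
      have hid : A⁻¹ * cw lam what s - B⁻¹ * cw lam w s
          = (A⁻¹ * cw lam what s) * ((B - A) / B)
            + (cw lam what s - cw lam w s) / B := by
        field_simp
        ring
      rw [hid]
      refine le_trans (abs_add_le _ _) (add_le_add ?_ ?_)
      · exact le_of_eq (by rw [abs_mul, abs_of_pos (mul_pos (inv_pos.2 hApos) hchat),
          abs_div, abs_of_pos hBpos])
      · exact le_of_eq (by rw [abs_div, abs_of_pos hBpos])
    calc ∑ s ∈ Pk, |A⁻¹ * cw lam what s - B⁻¹ * cw lam w s|
        ≤ ∑ s ∈ Pk, ((A⁻¹ * cw lam what s) * (|B - A| / B)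
            + |cw lam what s - cw lam w s| / B) := Finset.sum_le_sum hterm
      _ = (|B - A| / B) * ∑ s ∈ Pk, A⁻¹ * cw lam what s
            + (∑ s ∈ Pk, |cw lam what s - cw lam w s|) / B := by
          rw [Finset.sum_add_distrib, Finset.mul_sum, Finset.sum_div]
          congr 1
          exact Finset.sum_congr rfl fun s _ => by ring
      _ ≤ (δ * B / B) * 1 + (δ * B) / B := by
          rw [hsumA]
          exact add_le_add (mul_le_mul_of_nonneg_right
              ((div_le_div_iff_of_pos_right hBpos).2 hBA) zero_le_one)
            ((div_le_div_iff_of_pos_right hBpos).2 hsum_diff)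
      _ = 2 * δ := by
          have hBne : B ≠ 0 := ne_of_gt hBpos
          field_simp
          try ring
  -- difference expansion
  have hdiff_eq : (Qhat k).eval (lam i) - (Qstar k).eval (lam i)
      = ∑ s ∈ Pk, (A⁻¹ * cw lam what s - B⁻¹ * cw lam w s) * (pis lam s).eval (lam i) := by
    rw [hQhat_eq, hQstar_eq, Rp_eval, Rp_eval, ← hA, ← hB, ← hPk,
      Finset.mul_sum, Finset.mul_sum, ← Finset.sum_sub_distrib]
    exact Finset.sum_congr rfl fun s _ => by ring
  rw [hdiff_eq]
  calc |∑ s ∈ Pk, (A⁻¹ * cw lam what s - B⁻¹ * cw lam w s) * (pis lam s).eval (lam i)|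
      ≤ ∑ s ∈ Pk, |(A⁻¹ * cw lam what s - B⁻¹ * cw lam w s) * (pis lam s).eval (lam i)| :=
        Finset.abs_sum_le_sum_abs _ _
    _ = ∑ s ∈ Pk, |A⁻¹ * cw lam what s - B⁻¹ * cw lam w s| * |(pis lam s).eval (lam i)| :=
        Finset.sum_congr rfl fun s _ => abs_mul _ _
    _ ≤ ∑ s ∈ Pk, |A⁻¹ * cw lam what s - B⁻¹ * cw lam w s| * Mx :=
        Finset.sum_le_sum fun s hs =>
          mul_le_mul_of_nonneg_left (hMx_ge s hs) (abs_nonneg _)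
    _ = (∑ s ∈ Pk, |A⁻¹ * cw lam what s - B⁻¹ * cw lam w s|) * Mx := by
        rw [Finset.sum_mul]
    _ ≤ (2 * δ) * Mx := mul_le_mul_of_nonneg_right hcoef_bound hMx0
    _ = 2 * δ * Mx := by ring
end
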